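/- The product of all vertex stabilizers equals the identity, Π_{v∈V} S_v = I, and the product of all plaquette stabilizers equals the identity, Π_{v∈V} S_{p(v)} = I. Consequently, the projection onto the orthogonal complement of the code space satisfies Q⊥ ≤ Σ_{j ∈ 𝒮 \ {p*, v*}} P_j^−, where Q = Π_{j∈𝒮} P_j^+ and Q⊥ = I − Q. -/

import Mathlib

open scoped Matrix ComplexOrder

attribute [local instance] Matrix.normedAddCommGroup Matrix.normedSpace

namespace Toric

variable (L : ℕ) [NeZero L]

/-- Vertices of the periodic `L × L` lattice. -/
abbrev V := ZMod L × ZMod L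

/-- Edges: `(v, 0)` is the horizontal edge from `v` to `v + (1,0)`,
`(v, 1)` the vertical edge from `v` to `v + (0,1)`. -/
abbrev E := V L × Fin 2

/-- Operators on the `2L²` qubits: complex matrices indexed by `E → Fin 2`. -/
abbrev Op := Matrix (E L → Fin 2) (E L → Fin 2) ℂ

/-- Pauli `X` on edge `e`. -/
noncomputable def Xop (e : E L) : Op L := fun σ τ =>
  if τ e = 1 - σ e ∧ ∀ e' ≠ e, τ e' = σ e' then 1 else 0

/-- Pauli `Z` on edge `e`. -/
noncomputable def Zop (e : E L) : Op L :=
  Matrix.diagonal fun σ => (-1 : ℂ) ^ (σ e : ℕ)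

/-- Vertex stabilizer at `v`. -/
noncomputable def Sv (v : V L) : Op L :=
  Xop L (v, 0) * Xop L (v, 1) * Xop L (v - (1, 0), 0) * Xop L (v - (0, 1), 1)

/-- Plaquette stabilizer with south-west corner `v`. -/
noncomputable def Sp (v : V L) : Op L :=
  Zop L (v, 0) * Zop L (v, 1) * Zop L (v + (1, 0), 1) * Zop L (v + (0, 1), 0)

/-- Index set of stabilizer generators: `inl v` is the vertex generator at `v`,
`inr v` is the plaquette generator `p(v)`. -/
abbrev Gen := V L ⊕ V L

/-- The stabilizer associated with a generator index. -/
noncomputable def stab : Gen L → Op L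
  | Sum.inl v => Sv L v
  | Sum.inr v => Sp L v

/-- The starred vertex `v* = (1,1)`. -/
def vStar : Gen L := Sum.inl (1, 1)

/-- The starred plaquette `p* = p(0,0)`. -/
def pStar : Gen L := Sum.inr (0, 0)

/-- The correction operators. -/
noncomputable def corr : Gen L → Op L
  | Sum.inl (r, s) =>
      if (r, s) = ((1 : ZMod L), (1 : ZMod L)) then 1
      else if s ≠ 1 then Zop L ((r, s - 1), 1)
      else Zop L ((r - 1, 1), 0)
  | Sum.inr (r, s) =>
      if (r, s) = ((0 : ZMod L), (0 : ZMod L)) then 1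
      else if s ≠ 0 then Xop L ((r, s + 1), 0)
      else Xop L ((r + 1, 0), 1)

/-- `P_j^+ = (I + S_j)/2`. -/
noncomputable def Pplus (j : Gen L) : Op L := (2⁻¹ : ℂ) • (1 + stab L j)

/-- `P_j^- = (I - S_j)/2`. -/
noncomputable def Pminus (j : Gen L) : Op L := (2⁻¹ : ℂ) • (1 - stab L j)

/-- The correction channel `T_j(ρ) = P_j⁺ ρ P_j⁺ + C_j P_j⁻ ρ P_j⁻ C_j†` as a linear map. -/
noncomputable def Tj (j : Gen L) : Op L →ₗ[ℂ] Op L :=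
  LinearMap.comp (LinearMap.mulLeft ℂ (Pplus L j)) (LinearMap.mulRight ℂ (Pplus L j)) +
  LinearMap.comp (LinearMap.mulLeft ℂ (corr L j * Pminus L j))
    (LinearMap.mulRight ℂ (Pminus L j * (corr L j)ᴴ))

/-- The Liouvillian `L(ρ) = Σ_j (T_j(ρ) - ρ)`. -/
noncomputable def Liou : Op L →ₗ[ℂ] Op L :=
  ∑ j : Gen L, (Tj L j - LinearMap.id)

/-- The evolution `e^{tL}`. -/
noncomputable def expL (t : ℝ) : Op L →L[ℂ] Op L :=
  letI : IsTopologicalRing (Op L →L[ℂ] Op L) :=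
    @NonUnitalSeminormedRing.toIsTopologicalRing _
      (ContinuousLinearMap.toNormedRing (E := Op L) (𝕜 := ℂ)).toNonUnitalNormedRing.toNonUnitalSeminormedRing
  NormedSpace.exp ((t : ℂ) • (Liou L).toContinuousLinearMap)

/-- Product of a finite family of (commuting) operators, taken in some fixed enumeration order. -/
noncomputable def listProd {ι : Type*} [Fintype ι] (f : ι → Op L) : Op L :=
  ((Finset.univ : Finset ι).toList.map f).prod

/-- Logical `X̄₁`. -/
noncomputable def X1bar : Op L := listProd L fun s : ZMod L => Xop L ((0, s), 0)

/-- Logical `Z̄₁`. -/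
noncomputable def Z1bar : Op L := listProd L fun r : ZMod L => Zop L ((r, 1), 0)

/-- Logical `X̄₂`. -/
noncomputable def X2bar : Op L := listProd L fun r : ZMod L => Xop L ((r, 0), 1)

/-- Logical `Z̄₂`. -/
noncomputable def Z2bar : Op L := listProd L fun s : ZMod L => Zop L ((1, s), 1)

/-- The single-qubit Pauli matrices `I, X, Y, Z`. -/
noncomputable def pauli : Fin 4 → Matrix (Fin 2) (Fin 2) ℂ :=
  ![1, !![0, 1; 1, 0], !![0, -Complex.I; Complex.I, 0], !![1, 0; 0, -1]]

/-- Logical counterparts `Ī, X̄₁, Ȳ₁, Z̄₁` on the first logical qubit. -/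
noncomputable def logical1 : Fin 4 → Op L :=
  ![1, X1bar L, Complex.I • (X1bar L * Z1bar L), Z1bar L]

/-- Logical counterparts `Ī, X̄₂, Ȳ₂, Z̄₂` on the second logical qubit. -/
noncomputable def logical2 : Fin 4 → Op L :=
  ![1, X2bar L, Complex.I • (X2bar L * Z2bar L), Z2bar L]

/-- Logical counterpart `P̄ = P̄₁ P̄₂` of the two-qubit Pauli indexed by `(a, b)`. -/
noncomputable def logicalP (a b : Fin 4) : Op L := logical1 L a * logical2 L b

/-- `⟨Ψ| P₁ ⊗ P₂ |Ψ⟩` for the two-qubit Pauli indexed by `(a, b)`. -/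
noncomputable def expval (Ψ : Fin 2 → Fin 2 → ℂ) (a b : Fin 4) : ℂ :=
  ∑ x : Fin 2, ∑ x' : Fin 2, ∑ y : Fin 2, ∑ y' : Fin 2,
    (starRingEnd ℂ) (Ψ x y) * pauli a x x' * pauli b y y' * Ψ x' y'

/-- The qubit `A₁`. -/
def A1 : E L := (((0 : ZMod L), (1 : ZMod L)), 0)

/-- The qubit `A₂`. -/
def A2 : E L := (((1 : ZMod L), (0 : ZMod L)), 1)

/-- The qubits `B = {((0,s),0) : s ≠ 1}`. -/
def Bfin : Finset (E L) :=
  (Finset.univ.filter fun s : ZMod L => s ≠ 1).image fun s => (((0 : ZMod L), s), (0 : Fin 2))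

/-- The qubits `C = {((r,1),0) : r ≠ 0}`. -/
def Cfin : Finset (E L) :=
  (Finset.univ.filter fun r : ZMod L => r ≠ 0).image fun r => ((r, (1 : ZMod L)), (0 : Fin 2))

/-- The qubits `B' = {((r,0),1) : r ≠ 1}`. -/
def B'fin : Finset (E L) :=
  (Finset.univ.filter fun r : ZMod L => r ≠ 1).image fun r => ((r, (0 : ZMod L)), (1 : Fin 2))

/-- The qubits `C' = {((1,s),1) : s ≠ 0}`. -/
def C'fin : Finset (E L) :=
  (Finset.univ.filter fun s : ZMod L => s ≠ 0).image fun s => (((1 : ZMod L), s), (1 : Fin 2))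

/-- The remaining qubits `D`. -/
def Dfin : Finset (E L) :=
  Finset.univ \ ({A1 L, A2 L} ∪ Bfin L ∪ B'fin L ∪ Cfin L ∪ C'fin L)

/-- The initial state `ρ₀`: `|Ψ⟩⟨Ψ|` on `A₁A₂`, `|+⟩⟨+|` on `B ∪ B'`, `|0⟩⟨0|` on `C ∪ C'`,
and the arbitrary state `ρ_D` on the remaining qubits `D`. -/
noncomputable def rho0 (Ψ : Fin 2 → Fin 2 → ℂ)
    (ρD : Matrix ({e // e ∈ Dfin L} → Fin 2) ({e // e ∈ Dfin L} → Fin 2) ℂ) : Op L :=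
  fun σ τ =>
    Ψ (σ (A1 L)) (σ (A2 L)) * (starRingEnd ℂ) (Ψ (τ (A1 L)) (τ (A2 L))) *
    (∏ _e ∈ Bfin L ∪ B'fin L, (2⁻¹ : ℂ)) *
    (∏ e ∈ Cfin L ∪ C'fin L, if σ e = 0 ∧ τ e = 0 then (1 : ℂ) else 0) *
    ρD (fun d => σ d.1) (fun d => τ d.1)

/-- The projection `Q` onto the code space. -/
noncomputable def Qproj : Op L := listProd L fun j : Gen L => Pplus L j

/-- The projection `Q⊥ = I - Q` onto the orthogonal complement of the code space. -/
noncomputable def Qperp : Op L := 1 - Qproj L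

end Toric

/-- The positive semidefinite square root of a positive semidefinite matrix (as defined in the
older Mathlib, where it was `Matrix.PosSemidef.sqrt`). -/
noncomputable def Matrix.PosSemidef.sqrt {n : Type*} [Fintype n] [DecidableEq n] {𝕜 : Type*}
    [RCLike 𝕜] {A : Matrix n n 𝕜} (hA : A.PosSemidef) : Matrix n n 𝕜 :=
  hA.1.eigenvectorUnitary.1 * Matrix.diagonal ((↑) ∘ (√·) ∘ hA.1.eigenvalues) *
  (star hA.1.eigenvectorUnitary : Matrix n n 𝕜)

/-- The trace norm `‖A‖₁ = tr √(AᴴA)`. -/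
noncomputable def traceNorm {m : Type*} [Fintype m] [DecidableEq m] (A : Matrix m m ℂ) : ℝ :=
  ((Matrix.posSemidef_conjTranspose_mul_self A).sqrt.trace).re


set_option linter.unusedSectionVars false

namespace ToricAux
open Toric Matrix Finset

lemma fin2_add_self : ∀ x : Fin 2, x + x = 0 := by decide

lemma one_sub_fin2 : ∀ x : Fin 2, 1 - x = x + 1 := by decide

variable (L : ℕ) [NeZero L]

lemma G_add_self (a : E L → Fin 2) : a + a = 0 :=
  funext fun e => fin2_add_self (a e)

/-- Permutation matrix of translation by `a`. -/
noncomputable def Pm (a : E L → Fin 2) : Op L :=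
  Matrix.of fun σ τ => if τ = σ + a then (1 : ℂ) else 0

lemma Pm_zero : Pm L 0 = 1 := by
  ext σ τ
  simp [Pm, Matrix.one_apply, eq_comm]

lemma Pm_mul (a b : E L → Fin 2) : Pm L a * Pm L b = Pm L (a + b) := by
  ext σ τ
  simp only [Matrix.mul_apply, Pm, Matrix.of_apply, ite_mul, one_mul, zero_mul,
    Finset.sum_ite_eq', Finset.mem_univ, if_true, add_assoc]

def ipz (a b : E L → Fin 2) : Fin 2 := ∑ e, a e * b e

noncomputable def chi : Fin 2 → ℂ := fun x => if x = 0 then 1 else -1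

lemma fin2_eq : ∀ x : Fin 2, x = 0 ∨ x = 1 := by decide

lemma chi_add (x y : Fin 2) : chi (x + y) = chi x * chi y := by
  have h0 : ((1 : Fin 2) + 1) = 0 := rfl
  have h1 : (1 : Fin 2) ≠ 0 := by decide
  rcases fin2_eq x with rfl | rfl <;> rcases fin2_eq y with rfl | rfl <;>
    simp [chi, h0, h1] <;> norm_num

lemma ipz_add_left (a a' b : E L → Fin 2) :
    ipz L (a + a') b = ipz L a b + ipz L a' b := by
  simp [ipz, add_mul, Finset.sum_add_distrib]

lemma ipz_add_right (a b b' : E L → Fin 2) :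
    ipz L a (b + b') = ipz L a b + ipz L a b' := by
  simp [ipz, mul_add, Finset.sum_add_distrib]

lemma ipz_single_left (e : E L) (b : E L → Fin 2) :
    ipz L (Pi.single e 1) b = b e := by
  simp [ipz, Pi.single_apply, ite_mul, Finset.sum_ite_eq]

lemma ipz_single_single (e e' : E L) :
    ipz L (Pi.single e 1) (Pi.single e' 1) = if e = e' then 1 else 0 := by
  rw [ipz_single_left, Pi.single_apply]

/-- Diagonal sign matrix. -/
noncomputable def Dm (b : E L → Fin 2) : Op L :=
  Matrix.diagonal fun σ => chi (ipz L b σ)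

lemma ipz_zero_left (b : E L → Fin 2) : ipz L 0 b = 0 := by simp [ipz]

lemma Dm_zero : Dm L 0 = 1 := by
  simp [Dm, ipz_zero_left, chi]

lemma Dm_mul (a b : E L → Fin 2) : Dm L a * Dm L b = Dm L (a + b) := by
  simp [Dm, Matrix.diagonal_mul_diagonal, ipz_add_left, chi_add]

lemma Pm_mul_Dm (a b : E L → Fin 2) :
    Pm L a * Dm L b = chi (ipz L b a) • (Dm L b * Pm L a) := by
  ext σ τ
  rw [Dm, Matrix.smul_apply, Matrix.mul_diagonal, Matrix.diagonal_mul]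
  by_cases h : τ = σ + a
  · subst h
    simp only [Pm, Matrix.of_apply, if_pos rfl, ipz_add_right, chi_add,
      smul_eq_mul]
    ring
  · simp [Pm, h]

lemma Xop_eq (e : E L) : Xop L e = Pm L (Pi.single e 1) := by
  ext σ τ
  show (if _ then _ else _) = (if _ then _ else _)
  congr 1
  apply propext
  constructor
  · rintro ⟨h1, h2⟩
    funext e'
    by_cases he : e' = e
    · subst he
      rw [Pi.add_apply, Pi.single_eq_same, h1, one_sub_fin2]
    · rw [Pi.add_apply, Pi.single_eq_of_ne he, add_zero, h2 e' he]
  · rintro rfl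
    refine ⟨?_, fun e' he => ?_⟩
    · rw [Pi.add_apply, Pi.single_eq_same, one_sub_fin2]
    · rw [Pi.add_apply, Pi.single_eq_of_ne he, add_zero]

lemma Zop_eq (e : E L) : Zop L e = Dm L (Pi.single e 1) := by
  unfold Zop Dm
  refine congrArg Matrix.diagonal (funext fun σ => ?_)
  rw [ipz_single_left]
  rcases fin2_eq (σ e) with h | h <;> rw [h] <;> norm_num [chi]

/-- Vertex stabilizer support vector. -/
def av (v : V L) : E L → Fin 2 :=
  Pi.single ((v, 0) : E L) 1 + Pi.single ((v, 1) : E L) 1 +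
    Pi.single ((v - (1, 0), 0) : E L) 1 + Pi.single ((v - (0, 1), 1) : E L) 1

/-- Plaquette stabilizer support vector. -/
def bp (v : V L) : E L → Fin 2 :=
  Pi.single ((v, 0) : E L) 1 + Pi.single ((v, 1) : E L) 1 +
    Pi.single ((v + (1, 0), 1) : E L) 1 + Pi.single ((v + (0, 1), 0) : E L) 1

lemma Sv_eq (v : V L) : Sv L v = Pm L (av L v) := by
  rw [Sv, Xop_eq, Xop_eq, Xop_eq, Xop_eq, Pm_mul, Pm_mul, Pm_mul]; rfl

lemma Sp_eq (v : V L) : Sp L v = Dm L (bp L v) := by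
  rw [Sp, Zop_eq, Zop_eq, Zop_eq, Zop_eq, Dm_mul, Dm_mul, Dm_mul]; rfl

lemma sum_av : (∑ v : V L, av L v) = 0 := by
  have h1 : (∑ v : V L, (Pi.single ((v - (1, 0), 0) : E L) 1 : E L → Fin 2))
      = ∑ v : V L, (Pi.single ((v, 0) : E L) 1 : E L → Fin 2) :=
    Fintype.sum_equiv (Equiv.subRight ((1, 0) : V L))
      (fun v => (Pi.single ((v - (1, 0), 0) : E L) 1 : E L → Fin 2))
      (fun v => (Pi.single ((v, 0) : E L) 1 : E L → Fin 2)) (fun v => by simp)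
  have h2 : (∑ v : V L, (Pi.single ((v - (0, 1), 1) : E L) 1 : E L → Fin 2))
      = ∑ v : V L, (Pi.single ((v, 1) : E L) 1 : E L → Fin 2) :=
    Fintype.sum_equiv (Equiv.subRight ((0, 1) : V L))
      (fun v => (Pi.single ((v - (0, 1), 1) : E L) 1 : E L → Fin 2))
      (fun v => (Pi.single ((v, 1) : E L) 1 : E L → Fin 2)) (fun v => by simp)
  simp only [av, Finset.sum_add_distrib]
  rw [h1, h2]
  have key : ∀ x y : E L → Fin 2, x + y + x + y = x + x + (y + y) := by
    intros; abel
  rw [key, G_add_self, G_add_self, add_zero]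

lemma sum_bp : (∑ v : V L, bp L v) = 0 := by
  have h1 : (∑ v : V L, (Pi.single ((v + (1, 0), 1) : E L) 1 : E L → Fin 2))
      = ∑ v : V L, (Pi.single ((v, 1) : E L) 1 : E L → Fin 2) :=
    Fintype.sum_equiv (Equiv.addRight ((1, 0) : V L))
      (fun v => (Pi.single ((v + (1, 0), 1) : E L) 1 : E L → Fin 2))
      (fun v => (Pi.single ((v, 1) : E L) 1 : E L → Fin 2)) (fun v => by simp)
  have h2 : (∑ v : V L, (Pi.single ((v + (0, 1), 0) : E L) 1 : E L → Fin 2))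
      = ∑ v : V L, (Pi.single ((v, 0) : E L) 1 : E L → Fin 2) :=
    Fintype.sum_equiv (Equiv.addRight ((0, 1) : V L))
      (fun v => (Pi.single ((v + (0, 1), 0) : E L) 1 : E L → Fin 2))
      (fun v => (Pi.single ((v, 0) : E L) 1 : E L → Fin 2)) (fun v => by simp)
  simp only [bp, Finset.sum_add_distrib]
  rw [h1, h2]
  have key : ∀ x y : E L → Fin 2, x + y + y + x = x + x + (y + y) := by
    intros; abel
  rw [key, G_add_self, G_add_self, add_zero]

lemma list_Pm {ι : Type*} (g : ι → E L → Fin 2) :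
    ∀ l : List ι, ((l.map fun i => Pm L (g i)).prod = Pm L ((l.map g).sum))
  | [] => by simp [Pm_zero]
  | i :: l => by
    simp [List.map_cons, List.prod_cons, List.sum_cons, list_Pm g l, Pm_mul]

lemma list_Dm {ι : Type*} (g : ι → E L → Fin 2) :
    ∀ l : List ι, ((l.map fun i => Dm L (g i)).prod = Dm L ((l.map g).sum))
  | [] => by simp [Dm_zero]
  | i :: l => by
    simp [List.map_cons, List.prod_cons, List.sum_cons, list_Dm g l, Dm_mul]

lemma listProd_Pm {ι : Type*} [Fintype ι] (g : ι → E L → Fin 2) :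
    listProd L (fun i => Pm L (g i)) = Pm L (∑ i, g i) := by
  rw [listProd, list_Pm, Finset.sum_map_toList]

lemma listProd_Dm {ι : Type*} [Fintype ι] (g : ι → E L → Fin 2) :
    listProd L (fun i => Dm L (g i)) = Dm L (∑ i, g i) := by
  rw [listProd, list_Dm, Finset.sum_map_toList]

lemma prod_Sv : listProd L (fun v : V L => Sv L v) = 1 := by
  simp only [Sv_eq]
  rw [listProd_Pm, sum_av, Pm_zero]

lemma prod_Sp : listProd L (fun v : V L => Sp L v) = 1 := by
  simp only [Sp_eq]
  rw [listProd_Dm, sum_bp, Dm_zero]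

end ToricAux

namespace ToricAux
open Toric Matrix Finset
variable (L : ℕ) [NeZero L]

lemma ipz_bp_av (w v : V L) : ipz L (bp L w) (av L v) = 0 := by
  have e1 : (w = v - ((1, 0) : V L)) ↔ (w + (1, 0) = v) := eq_sub_iff_add_eq
  have e2 : (w = v - ((0, 1) : V L)) ↔ (w + (0, 1) = v) := eq_sub_iff_add_eq
  have e3 : (w + ((0, 1) : V L) = v - (1, 0)) ↔ (w + (1, 0) + (0, 1) = v) := by
    rw [eq_sub_iff_add_eq, add_right_comm]
  have e4 : (w + ((1, 0) : V L) = v - (0, 1)) ↔ (w + (1, 0) + (0, 1) = v) :=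
    eq_sub_iff_add_eq
  have hf : ¬((1 : Fin 2) = 0) := by decide
  have hf' : ¬((0 : Fin 2) = 1) := by decide
  simp only [bp, av, ipz_add_left, ipz_add_right, ipz_single_single,
    Prod.mk.injEq, e1, e2, e3, e4, hf, hf', and_true, and_false, if_false,
    if_true, add_zero, zero_add]
  split_ifs <;> decide

end ToricAux

namespace ToricAux
open Toric Matrix Finset
variable (L : ℕ) [NeZero L]

lemma chi_zero : chi 0 = 1 := by simp [chi]

lemma Pm_Dm_comm (a b : E L → Fin 2) (h : ipz L b a = 0) :
    Pm L a * Dm L b = Dm L b * Pm L a := by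
  rw [Pm_mul_Dm, h, chi_zero, one_smul]

lemma stab_comm (j k : Gen L) : Commute (stab L j) (stab L k) := by
  rcases j with v | v <;> rcases k with w | w <;> unfold Commute SemiconjBy <;> simp only [stab]
  · rw [Sv_eq, Sv_eq, Pm_mul, Pm_mul, add_comm]
  · rw [Sv_eq, Sp_eq, Pm_Dm_comm L _ _ (ipz_bp_av L w v)]
  · rw [Sv_eq, Sp_eq, Pm_Dm_comm L _ _ (ipz_bp_av L v w)]
  · rw [Sp_eq, Sp_eq, Dm_mul, Dm_mul, add_comm]

lemma stab_sq (j : Gen L) : stab L j * stab L j = 1 := by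
  rcases j with v | v <;> simp only [stab]
  · rw [Sv_eq, Pm_mul, G_add_self, Pm_zero]
  · rw [Sp_eq, Dm_mul, G_add_self, Dm_zero]

lemma Pm_herm (a : E L → Fin 2) : (Pm L a).IsHermitian := by
  have ha : ∀ σ τ : E L → Fin 2, (σ = τ + a) ↔ (τ = σ + a) := by
    intro σ τ
    constructor <;> rintro rfl <;> rw [add_assoc, G_add_self, add_zero]
  show (Pm L a)ᴴ = Pm L a
  refine Matrix.ext fun σ τ => ?_
  rw [Matrix.conjTranspose_apply]
  simp only [Pm, Matrix.of_apply]
  by_cases h : τ = σ + a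
  · rw [if_pos h, if_pos ((ha σ τ).mpr h), star_one]
  · rw [if_neg h, if_neg (fun hc => h ((ha σ τ).mp hc)), star_zero]

lemma chi_star (x : Fin 2) : star (chi x) = chi x := by
  rcases fin2_eq x with rfl | rfl <;> simp [chi]

lemma Dm_herm (b : E L → Fin 2) : (Dm L b).IsHermitian := by
  show (Dm L b)ᴴ = Dm L b
  refine Matrix.ext fun σ τ => ?_
  rw [Matrix.conjTranspose_apply]
  unfold Dm
  by_cases h : σ = τ
  · subst h
    rw [Matrix.diagonal_apply_eq, chi_star]
  · rw [Matrix.diagonal_apply_ne _ h, Matrix.diagonal_apply_ne' _ h, star_zero]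

lemma stab_herm (j : Gen L) : (stab L j).IsHermitian := by
  rcases j with v | v <;> simp only [stab]
  · rw [Sv_eq]; exact Pm_herm L _
  · rw [Sp_eq]; exact Dm_herm L _

lemma star_half : star ((2 : ℂ)⁻¹) = (2 : ℂ)⁻¹ := by
  rw [star_inv₀]
  norm_num

lemma Pplus_herm (j : Gen L) : (Pplus L j).IsHermitian := by
  show (Pplus L j)ᴴ = Pplus L j
  rw [Pplus, Matrix.conjTranspose_smul, Matrix.conjTranspose_add,
    Matrix.conjTranspose_one, (stab_herm L j).eq, star_half]

lemma Pplus_idem (j : Gen L) : Pplus L j * Pplus L j = Pplus L j := by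
  rw [Pplus, smul_mul_smul_comm]
  have h : (1 + stab L j) * (1 + stab L j) = (2 : ℂ) • (1 + stab L j) := by
    simp only [mul_add, add_mul, one_mul, mul_one, stab_sq, two_smul]
    abel
  rw [h, smul_smul]
  norm_num

lemma Pplus_comm (j k : Gen L) : Commute (Pplus L j) (Pplus L k) := by
  unfold Pplus
  have h1 : Commute (stab L j) (1 + stab L k) :=
    (Commute.one_right _).add_right (stab_comm L j k)
  have h2 : Commute (1 + stab L j) (1 + stab L k) :=
    (Commute.one_left _).add_left h1
  exact (h2.smul_left _).smul_right _

lemma Pminus_eq (j : Gen L) : Pminus L j = 1 - Pplus L j := by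
  rw [Pminus, Pplus, smul_sub, smul_add]
  have h : (2 : ℂ)⁻¹ • (1 : Op L) + (2 : ℂ)⁻¹ • (1 : Op L) = 1 := by
    rw [← add_smul]
    norm_num
  rw [eq_sub_iff_add_eq]
  calc (2 : ℂ)⁻¹ • (1 : Op L) - (2:ℂ)⁻¹ • stab L j +
        ((2:ℂ)⁻¹ • 1 + (2:ℂ)⁻¹ • stab L j)
      = (2:ℂ)⁻¹ • (1 : Op L) + (2:ℂ)⁻¹ • 1 := by abel
    _ = 1 := h

/-- A Hermitian idempotent is positive semidefinite. -/
lemma proj_psd {M : Op L} (h1 : M.IsHermitian) (h2 : M * M = M) :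
    M.PosSemidef := by
  have h := Matrix.posSemidef_conjTranspose_mul_self M
  rwa [h1.eq, h2] at h

lemma proj_mul {M N : Op L} (hM1 : M.IsHermitian) (hM2 : M * M = M)
    (hN1 : N.IsHermitian) (hN2 : N * N = N) (hc : Commute M N) :
    (M * N).IsHermitian ∧ (M * N) * (M * N) = M * N := by
  constructor
  · show (M * N)ᴴ = M * N
    rw [Matrix.conjTranspose_mul, hM1.eq, hN1.eq, ← hc.eq]
  · have h : N * (M * N) = M * (N * N) := by
      rw [← mul_assoc, ← hc.eq, mul_assoc]
    rw [mul_assoc, h, ← mul_assoc, hM2, hN2]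

lemma one_sub_proj {M : Op L} (h1 : M.IsHermitian) (h2 : M * M = M) :
    (1 - M).IsHermitian ∧ (1 - M) * (1 - M) = 1 - M := by
  constructor
  · show (1 - M)ᴴ = 1 - M
    rw [Matrix.conjTranspose_sub, Matrix.conjTranspose_one, h1.eq]
  · simp only [mul_sub, sub_mul, one_mul, mul_one, h2]
    abel

lemma pairwise_of_forall_list {α : Type*} (R : α → α → Prop) (h : ∀ a b, R a b) :
    ∀ l : List α, l.Pairwise R
  | [] => List.Pairwise.nil
  | a :: l => List.Pairwise.cons (fun b _ => h a b) (pairwise_of_forall_list R h l)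

set_option maxHeartbeats 1000000 in
/-- Key bound: for a list of pairwise-commuting orthogonal projections,
`1 - ∏ P ≤ ∑ (1 - P)`. -/
lemma list_bound (l : List (Op L)) :
    (∀ M ∈ l, M.IsHermitian ∧ M * M = M) → l.Pairwise Commute →
    (l.prod.IsHermitian ∧ l.prod * l.prod = l.prod) ∧
      ((l.map (fun M => 1 - M)).sum - (1 - l.prod)).PosSemidef := by
  induction l with
  | nil =>
    intro _ _
    refine ⟨⟨Matrix.isHermitian_one, one_mul 1⟩, ?_⟩
    simp only [List.map_nil, List.prod_nil, List.sum_nil, sub_self, zero_sub,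
      neg_zero]
    exact Matrix.PosSemidef.zero
  | cons P l ih =>
    intro hmem hpair
    obtain ⟨hPh, hPi⟩ := hmem P List.mem_cons_self
    have hpc := List.pairwise_cons.mp hpair
    have IH := ih (fun M hM => hmem M (List.mem_cons_of_mem _ hM)) hpc.2
    obtain ⟨⟨hRh, hRi⟩, hpsd⟩ := IH
    have hcPR : Commute P l.prod := Commute.list_prod_right _ _ hpc.1
    refine ⟨proj_mul L hPh hPi hRh hRi hcPR, ?_⟩
    rw [List.map_cons, List.sum_cons, List.prod_cons]
    have halg : (1 - P) + (l.map (fun M => 1 - M)).sum - (1 - P * l.prod)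
        = ((l.map (fun M => 1 - M)).sum - (1 - l.prod)) + (1 - P) * (1 - l.prod) := by
      simp only [mul_sub, sub_mul, one_mul, mul_one]
      abel
    rw [halg]
    refine Matrix.PosSemidef.add hpsd ?_
    have h1P := one_sub_proj L hPh hPi
    have h1R := one_sub_proj L hRh hRi
    have hc : Commute (1 - P) (1 - l.prod) := by
      have h' : Commute P (1 - l.prod) := (Commute.one_right P).sub_right hcPR
      exact (Commute.one_left _).sub_left h'
    obtain ⟨hh, hi⟩ := proj_mul L h1P.1 h1P.2 h1R.1 h1R.2 hc
    exact proj_psd L hh hi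

end ToricAux

namespace ToricAux
open Toric Matrix Finset
variable (L : ℕ) [NeZero L]

lemma stab_range_comm :
    ∀ a ∈ Set.range (stab L), ∀ b ∈ Set.range (stab L), a * b = b * a := by
  rintro _ ⟨j, rfl⟩ _ ⟨k, rfl⟩
  exact (stab_comm L j k).eq

/-- The (commutative) subalgebra generated by the stabilizers. -/
noncomputable abbrev SA : Subalgebra ℂ (Op L) := Algebra.adjoin ℂ (Set.range (stab L))

noncomputable instance : CommRing ↥(SA L) :=
  Algebra.adjoinCommRingOfComm ℂ (stab_range_comm L)

noncomputable def SS (j : Gen L) : ↥(SA L) :=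
  ⟨stab L j, Algebra.subset_adjoin ⟨j, rfl⟩⟩

noncomputable def PP (j : Gen L) : ↥(SA L) := (2⁻¹ : ℂ) • (1 + SS L j)

lemma coe_PP (j : Gen L) : (PP L j).val = Pplus L j := rfl

lemma coe_list_prod (l : List ↥(SA L)) :
    (l.prod).val = (l.map (fun x => x.val)).prod := by
  induction l with
  | nil => rfl
  | cons x l ih =>
    rw [List.prod_cons, List.map_cons, List.prod_cons, ← ih]
    rfl

lemma coe_finset_prod {ι : Type*} (s : Finset ι) (g : ι → ↥(SA L)) :
    (∏ i ∈ s, g i).val = (s.toList.map (fun i => (g i).val)).prod := by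
  rw [← Finset.prod_map_toList, coe_list_prod, List.map_map]
  rfl

lemma listProd_coe {ι : Type*} [Fintype ι] (g : ι → ↥(SA L)) :
    listProd L (fun i => (g i).val) = (∏ i, g i).val := by
  rw [coe_finset_prod, listProd]

lemma SS_sq (j : Gen L) : SS L j * SS L j = 1 :=
  Subtype.ext (stab_sq L j)

lemma prod_SS_inl : (∏ v : V L, SS L (Sum.inl v)) = 1 := by
  apply Subtype.val_injective
  rw [coe_finset_prod]
  exact prod_Sv L

lemma prod_SS_inr : (∏ v : V L, SS L (Sum.inr v)) = 1 := by
  apply Subtype.val_injective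
  rw [coe_finset_prod]
  exact prod_Sp L

lemma Pplus_mul_stab (j : Gen L) : Pplus L j * stab L j = Pplus L j := by
  rw [Pplus, smul_mul_assoc, add_mul, one_mul, stab_sq, add_comm]

lemma Pplus_absorb (j : Gen L) (M : Op L) (h : stab L j * M = M) :
    Pplus L j * M = M := by
  rw [Pplus, smul_mul_assoc, add_mul, one_mul, h, ← two_smul ℂ, smul_smul]
  norm_num

lemma PP_mul_SS (j : Gen L) : PP L j * SS L j = PP L j :=
  Subtype.ext (Pplus_mul_stab L j)

lemma SS_vStar : SS L (vStar L)
    = ∏ v ∈ Finset.univ.erase ((1, 1) : V L), SS L (Sum.inl v) := by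
  have h := Finset.mul_prod_erase Finset.univ (fun v => SS L (Sum.inl v))
    (Finset.mem_univ ((1, 1) : V L))
  rw [prod_SS_inl] at h
  calc SS L (vStar L) = SS L (Sum.inl ((1, 1) : V L)) * 1 := (mul_one _).symm
    _ = SS L (Sum.inl ((1, 1) : V L)) * (SS L (Sum.inl ((1, 1) : V L)) *
        ∏ v ∈ Finset.univ.erase ((1, 1) : V L), SS L (Sum.inl v)) := by rw [h]
    _ = (SS L (Sum.inl ((1, 1) : V L)) * SS L (Sum.inl ((1, 1) : V L))) *
        ∏ v ∈ Finset.univ.erase ((1, 1) : V L), SS L (Sum.inl v) :=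
      (mul_assoc _ _ _).symm
    _ = _ := by rw [SS_sq, one_mul]

lemma SS_pStar : SS L (pStar L)
    = ∏ v ∈ Finset.univ.erase ((0, 0) : V L), SS L (Sum.inr v) := by
  have h := Finset.mul_prod_erase Finset.univ (fun v => SS L (Sum.inr v))
    (Finset.mem_univ ((0, 0) : V L))
  rw [prod_SS_inr] at h
  calc SS L (pStar L) = SS L (Sum.inr ((0, 0) : V L)) * 1 := (mul_one _).symm
    _ = SS L (Sum.inr ((0, 0) : V L)) * (SS L (Sum.inr ((0, 0) : V L)) *
        ∏ v ∈ Finset.univ.erase ((0, 0) : V L), SS L (Sum.inr v)) := by rw [h]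
    _ = (SS L (Sum.inr ((0, 0) : V L)) * SS L (Sum.inr ((0, 0) : V L))) *
        ∏ v ∈ Finset.univ.erase ((0, 0) : V L), SS L (Sum.inr v) :=
      (mul_assoc _ _ _).symm
    _ = _ := by rw [SS_sq, one_mul]

/-- The index set `𝒮 \ {p*, v*}`. -/
noncomputable def Tset : Finset (Gen L) := Finset.univ \ {pStar L, vStar L}

lemma prod_elim_inl :
    SS L (vStar L) = ∏ j ∈ Tset L,
      (Sum.elim (fun v => SS L (Sum.inl v)) (fun _ => (1 : ↥(SA L))) j) := by
  classical
  have hinj : ∀ x ∈ Finset.univ.erase ((1, 1) : V L),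
      ∀ y ∈ Finset.univ.erase ((1, 1) : V L),
      (Sum.inl x : Gen L) = Sum.inl y → x = y := fun x _ y _ h => Sum.inl.inj h
  have h1 := Finset.prod_image
    (f := Sum.elim (fun v => SS L (Sum.inl v)) (fun _ => (1 : ↥(SA L))))
    (g := fun v => (Sum.inl v : Gen L)) hinj
  have hsub : (Finset.univ.erase ((1, 1) : V L)).image
      (fun v => (Sum.inl v : Gen L)) ⊆ Tset L := by
    intro j hj
    simp only [Finset.mem_image, Finset.mem_erase, Finset.mem_univ, and_true] at hj
    obtain ⟨v, hv, rfl⟩ := hj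
    have hv' : v ≠ 1 := hv
    simp [Tset, pStar, vStar, hv', hv]
  have hone : ∀ j ∈ Tset L, j ∉ (Finset.univ.erase ((1, 1) : V L)).image
      (fun v => (Sum.inl v : Gen L)) →
      (Sum.elim (fun v => SS L (Sum.inl v)) (fun _ => (1 : ↥(SA L))) j) = 1 := by
    intro j hjT hjn
    rcases j with v | w
    · exfalso
      apply hjn
      simp only [Finset.mem_image, Finset.mem_erase, Finset.mem_univ, and_true]
      refine ⟨v, fun hv => ?_, rfl⟩
      subst hv
      simp [Tset, vStar] at hjT
    · rfl
  calc SS L (vStar L)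
      = ∏ v ∈ Finset.univ.erase ((1, 1) : V L), SS L (Sum.inl v) := SS_vStar L
    _ = ∏ j ∈ (Finset.univ.erase ((1, 1) : V L)).image
          (fun v => (Sum.inl v : Gen L)),
          (Sum.elim (fun v => SS L (Sum.inl v)) (fun _ => (1 : ↥(SA L))) j) :=
        h1.symm
    _ = _ := Finset.prod_subset hsub hone

lemma prod_elim_inr :
    SS L (pStar L) = ∏ j ∈ Tset L,
      (Sum.elim (fun _ => (1 : ↥(SA L))) (fun w => SS L (Sum.inr w)) j) := by
  classical
  have hinj : ∀ x ∈ Finset.univ.erase ((0, 0) : V L),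
      ∀ y ∈ Finset.univ.erase ((0, 0) : V L),
      (Sum.inr x : Gen L) = Sum.inr y → x = y := fun x _ y _ h => Sum.inr.inj h
  have h1 := Finset.prod_image
    (f := Sum.elim (fun _ => (1 : ↥(SA L))) (fun w => SS L (Sum.inr w)))
    (g := fun v => (Sum.inr v : Gen L)) hinj
  have hsub : (Finset.univ.erase ((0, 0) : V L)).image
      (fun v => (Sum.inr v : Gen L)) ⊆ Tset L := by
    intro j hj
    simp only [Finset.mem_image, Finset.mem_erase, Finset.mem_univ, and_true] at hj
    obtain ⟨v, hv, rfl⟩ := hj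
    have hv' : v ≠ 0 := hv
    simp [Tset, pStar, vStar, hv', hv]
  have hone : ∀ j ∈ Tset L, j ∉ (Finset.univ.erase ((0, 0) : V L)).image
      (fun v => (Sum.inr v : Gen L)) →
      (Sum.elim (fun _ => (1 : ↥(SA L))) (fun w => SS L (Sum.inr w)) j) = 1 := by
    intro j hjT hjn
    rcases j with v | w
    · rfl
    · exfalso
      apply hjn
      simp only [Finset.mem_image, Finset.mem_erase, Finset.mem_univ, and_true]
      refine ⟨w, fun hw => ?_, rfl⟩
      subst hw
      simp [Tset, pStar] at hjT
  calc SS L (pStar L)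
      = ∏ v ∈ Finset.univ.erase ((0, 0) : V L), SS L (Sum.inr v) := SS_pStar L
    _ = ∏ j ∈ (Finset.univ.erase ((0, 0) : V L)).image
          (fun v => (Sum.inr v : Gen L)),
          (Sum.elim (fun _ => (1 : ↥(SA L))) (fun w => SS L (Sum.inr w)) j) :=
        h1.symm
    _ = _ := Finset.prod_subset hsub hone

lemma prodT_mul_SS_vStar :
    (∏ j ∈ Tset L, PP L j) * SS L (vStar L) = ∏ j ∈ Tset L, PP L j := by
  rw [prod_elim_inl, ← Finset.prod_mul_distrib]
  refine Finset.prod_congr rfl fun j _ => ?_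
  rcases j with v | w
  · exact PP_mul_SS L (Sum.inl v)
  · exact mul_one _

lemma prodT_mul_SS_pStar :
    (∏ j ∈ Tset L, PP L j) * SS L (pStar L) = ∏ j ∈ Tset L, PP L j := by
  rw [prod_elim_inr, ← Finset.prod_mul_distrib]
  refine Finset.prod_congr rfl fun j _ => ?_
  rcases j with v | w
  · exact mul_one _
  · exact PP_mul_SS L (Sum.inr w)

end ToricAux

namespace ToricAux
open Toric Matrix Finset
variable (L : ℕ) [NeZero L]

lemma PP_star_mul_prodT_v :
    PP L (vStar L) * (∏ j ∈ Tset L, PP L j) = ∏ j ∈ Tset L, PP L j := by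
  apply Subtype.val_injective
  have h : SS L (vStar L) * (∏ j ∈ Tset L, PP L j) = ∏ j ∈ Tset L, PP L j := by
    rw [mul_comm]
    exact prodT_mul_SS_vStar L
  exact Pplus_absorb L (vStar L) _ (congrArg Subtype.val h)

lemma PP_star_mul_prodT_p :
    PP L (pStar L) * (∏ j ∈ Tset L, PP L j) = ∏ j ∈ Tset L, PP L j := by
  apply Subtype.val_injective
  have h : SS L (pStar L) * (∏ j ∈ Tset L, PP L j) = ∏ j ∈ Tset L, PP L j := by
    rw [mul_comm]
    exact prodT_mul_SS_pStar L
  exact Pplus_absorb L (pStar L) _ (congrArg Subtype.val h)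

lemma prod_univ_PP : (∏ j : Gen L, PP L j) = ∏ j ∈ Tset L, PP L j := by
  classical
  have hne : pStar L ≠ vStar L := by simp [pStar, vStar]
  have hvT : vStar L ∉ Tset L := by simp [Tset]
  have hpT : pStar L ∉ insert (vStar L) (Tset L) := by simp [Tset, hne]
  have huniv : (Finset.univ : Finset (Gen L))
      = insert (pStar L) (insert (vStar L) (Tset L)) := by
    ext j
    simp only [Finset.mem_univ, Finset.mem_insert, Tset, Finset.mem_sdiff,
      Finset.mem_singleton, true_iff, true_and]
    by_cases h1 : j = pStar L
    · tauto
    · by_cases h2 : j = vStar L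
      · tauto
      · right; right; simp [h1, h2]
  rw [huniv, Finset.prod_insert hpT, Finset.prod_insert hvT,
    PP_star_mul_prodT_v, PP_star_mul_prodT_p]

lemma Qproj_eq_prodT :
    Qproj L = ((Tset L).toList.map (fun j => Pplus L j)).prod := by
  have e1 : Qproj L = (∏ j : Gen L, PP L j).val := by
    rw [Qproj, ← listProd_coe]
    simp only [coe_PP]
  rw [e1, prod_univ_PP, coe_finset_prod]
  simp only [coe_PP]

lemma final_bound :
    ((∑ j ∈ Finset.univ \ ({pStar L, vStar L} : Finset (Gen L)), Pminus L j) -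
      Qperp L).PosSemidef := by
  classical
  have hproj : ∀ M ∈ (Tset L).toList.map (fun j => Pplus L j),
      M.IsHermitian ∧ M * M = M := by
    intro M hM
    obtain ⟨j, _, rfl⟩ := List.mem_map.mp hM
    exact ⟨Pplus_herm L j, Pplus_idem L j⟩
  have hpair : ((Tset L).toList.map (fun j => Pplus L j)).Pairwise Commute := by
    rw [List.pairwise_map]
    exact pairwise_of_forall_list _ (fun a b => Pplus_comm L a b) _
  have hb := (list_bound L _ hproj hpair).2
  have hsum : (((Tset L).toList.map (fun j => Pplus L j)).map
      (fun M => 1 - M)).sum = ∑ j ∈ Tset L, Pminus L j := by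
    rw [List.map_map]
    have h : ((fun M : Op L => 1 - M) ∘ fun j => Pplus L j)
        = fun j => Pminus L j := funext fun j => (Pminus_eq L j).symm
    rw [h, Finset.sum_map_toList]
  rw [hsum, ← Qproj_eq_prodT L] at hb
  show ((∑ j ∈ Tset L, Pminus L j) - (1 - Qproj L)).PosSemidef
  exact hb

end ToricAux


open Toric in
/-- the product of all vertex stabilizers and the product of all plaquette
stabilizers both equal the identity; consequently `Q⊥ ≤ Σ_{j ∈ 𝒮 \ {p*, v*}} P_j⁻`
(the difference is positive semidefinite). -/
theorem toric_code_stabilizer_products_and_Qperp_bound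
    (L : ℕ) [NeZero L] (hL : 2 ≤ L) :
    listProd L (fun v : V L => Sv L v) = 1 ∧
    listProd L (fun v : V L => Sp L v) = 1 ∧
    ((∑ j ∈ Finset.univ \ ({pStar L, vStar L} : Finset (Gen L)), Pminus L j) -
      Qperp L).PosSemidef :=
  ⟨ToricAux.prod_Sv L, ToricAux.prod_Sp L, ToricAux.final_bound L⟩
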